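/- Let H be a complex Hilbert space, let A, B, S : H →L[ℂ] H be bounded operators with A self-adjoint, S self-adjoint, positive, and invertible, and S ∘ S = B. Let t > 0. If both t·B − A and t·B + A are positive operators (i.e., −t·B ≤ A ≤ t·B in the Loewner order), then ‖S⁻¹ ∘ A ∘ S⁻¹‖ ≤ t. -/

import Mathlib

open ContinuousLinearMap in
/-- A self-adjoint-ish operator whose quadratic form is bounded by `M * ‖x‖²` has norm `≤ M`. -/
lemma aux_norm_le {E : Type*} [NormedAddCommGroup E] [InnerProductSpace ℂ E]
    (T : E →L[ℂ] E) (hsym : ∀ x y : E, (inner ℂ (T x) y : ℂ).re = (inner ℂ (T y) x : ℂ).re)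
    {M : ℝ} (hM : 0 ≤ M) (h : ∀ x, |(inner ℂ (T x) x : ℂ).re| ≤ M * ‖x‖ ^ 2) : ‖T‖ ≤ M := by
  refine T.opNorm_le_bound hM fun x => ?_
  rcases eq_or_ne x 0 with rfl | hx
  · simp
  rcases eq_or_ne (T x) 0 with hTx | hTx
  · simp [hTx]; positivity
  have key : ∀ y z : E, 4 * (inner ℂ (T y) z : ℂ).re ≤ 2 * M * (‖y‖ ^ 2 + ‖z‖ ^ 2) := by
    intro y z
    have e : (inner ℂ (T (y + z)) (y + z) : ℂ).re - (inner ℂ (T (y - z)) (y - z) : ℂ).re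
        = 4 * (inner ℂ (T y) z : ℂ).re := by
      simp only [map_add, map_sub, inner_add_left, inner_add_right, inner_sub_left,
        inner_sub_right, Complex.add_re, Complex.sub_re]
      have := hsym y z
      linarith
    have par : ‖y + z‖ ^ 2 + ‖y - z‖ ^ 2 = 2 * (‖y‖ ^ 2 + ‖z‖ ^ 2) := by
      have := parallelogram_law_with_norm ℂ y z
      ring_nf
      ring_nf at this
      linarith
    have b1 := (abs_le.mp (h (y + z))).2
    have b2 := (abs_le.mp (h (y - z))).1
    have : 4 * (inner ℂ (T y) z : ℂ).re ≤ M * ‖y + z‖ ^ 2 + M * ‖y - z‖ ^ 2 := by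
      rw [← e]; linarith
    calc 4 * (inner ℂ (T y) z : ℂ).re ≤ M * ‖y + z‖ ^ 2 + M * ‖y - z‖ ^ 2 := this
      _ = M * (‖y + z‖ ^ 2 + ‖y - z‖ ^ 2) := by ring
      _ = 2 * M * (‖y‖ ^ 2 + ‖z‖ ^ 2) := by rw [par]; ring
  set c : ℂ := ((‖x‖ / ‖T x‖ : ℝ) : ℂ) with hc
  have hkey := key x (c • T x)
  have hTx' : ‖T x‖ ≠ 0 := norm_ne_zero_iff.mpr hTx
  have hself : (inner ℂ (T x) (T x) : ℂ) = ((‖T x‖ : ℝ) : ℂ) ^ 2 := by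
    exact_mod_cast inner_self_eq_norm_sq_to_K (𝕜 := ℂ) (T x)
  have hre : (inner ℂ (T x) (c • T x) : ℂ).re = ‖x‖ * ‖T x‖ := by
    rw [inner_smul_right, hself, hc, ← Complex.ofReal_pow, ← Complex.ofReal_mul,
      Complex.ofReal_re]
    field_simp
  have hnc : ‖c • T x‖ = ‖x‖ := by
    rw [norm_smul, hc]
    simp only [Complex.norm_real, Real.norm_eq_abs, abs_div,
      abs_of_nonneg (norm_nonneg x), abs_of_nonneg (norm_nonneg (T x))]
    field_simp
  rw [hre, hnc] at hkey
  have hx' : 0 < ‖x‖ := norm_pos_iff.mpr hx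
  nlinarith [hkey]

theorem stmt1 {H : Type*} [NormedAddCommGroup H] [InnerProductSpace ℂ H] [CompleteSpace H]
    (A B S Sinv : H →L[ℂ] H) (hA : IsSelfAdjoint A) (hSsa : IsSelfAdjoint S)
    (hSpos : S.IsPositive) (hinv1 : S ∘L Sinv = 1) (hinv2 : Sinv ∘L S = 1)
    (hSB : S ∘L S = B) (t : ℝ) (ht : 0 < t)
    (h1 : (t • B - A).IsPositive) (h2 : (t • B + A).IsPositive) :
    ‖Sinv ∘L A ∘L Sinv‖ ≤ t := by
  have h1m : S * Sinv = 1 := hinv1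
  have h2m : Sinv * S = 1 := hinv2
  have hSinv_sa : IsSelfAdjoint Sinv := by
    have h3 : star Sinv * S = 1 := by
      calc star Sinv * S = star Sinv * star S := by rw [hSsa.star_eq]
        _ = star (S * Sinv) := (star_mul _ _).symm
        _ = 1 := by rw [h1m, star_one]
    show star Sinv = Sinv
    calc star Sinv = star Sinv * 1 := (mul_one _).symm
      _ = star Sinv * (S * Sinv) := by rw [h1m]
      _ = (star Sinv * S) * Sinv := (mul_assoc _ _ _).symm
      _ = Sinv := by rw [h3, one_mul]
  have hSsym : ∀ x y : H, (inner ℂ (Sinv x) y : ℂ) = inner ℂ x (Sinv y) := by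
    intro x y
    have := (ContinuousLinearMap.isSelfAdjoint_iff_isSymmetric.mp hSinv_sa) x y
    exact this
  have hS2sym : ∀ x y : H, (inner ℂ (S x) y : ℂ) = inner ℂ x (S y) :=
    fun x y => (ContinuousLinearMap.isSelfAdjoint_iff_isSymmetric.mp hSsa) x y
  have hC : IsSelfAdjoint (Sinv ∘L A ∘L Sinv) := by
    show star (Sinv * (A * Sinv)) = Sinv * (A * Sinv)
    simp [star_mul, hSinv_sa.star_eq, hA.star_eq, mul_assoc]
  have hCsym := ContinuousLinearMap.isSelfAdjoint_iff_isSymmetric.mp hC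
  refine aux_norm_le _ (fun x y => ?_) ht.le (fun x => ?_)
  · have e1 : (inner ℂ ((Sinv ∘L A ∘L Sinv) x) y : ℂ) = inner ℂ x ((Sinv ∘L A ∘L Sinv) y) :=
      hCsym x y
    have e2 : (inner ℂ x ((Sinv ∘L A ∘L Sinv) y) : ℂ)
        = starRingEnd ℂ (inner ℂ ((Sinv ∘L A ∘L Sinv) y) x) := (inner_conj_symm _ _).symm
    rw [e1, e2, Complex.conj_re]
  · -- the quadratic form bound
    set g := Sinv x with hg
    have hSg : S g = x := by
      have := congrArg (fun f => f x) hinv1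
      simpa [hg] using this
    have hq : (inner ℂ ((Sinv ∘L A ∘L Sinv) x) x : ℂ) = inner ℂ (A g) g := by
      show (inner ℂ (Sinv (A (Sinv x))) x : ℂ) = inner ℂ (A g) g
      rw [hSsym (A (Sinv x)) x, ← hg]
    have hB : (inner ℂ (B g) g : ℂ) = ((‖x‖ : ℝ) : ℂ) ^ 2 := by
      have hBg : B g = S (S g) := by rw [← hSB]; rfl
      rw [hBg, hS2sym (S g) g, hSg]
      exact_mod_cast inner_self_eq_norm_sq_to_K (𝕜 := ℂ) x
    have hb1 := h1.inner_nonneg_left g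
    have hb2 := h2.inner_nonneg_left g
    replace hb1 := (Complex.le_def.mp hb1).1
    replace hb2 := (Complex.le_def.mp hb2).1
    simp only [Complex.zero_re] at hb1 hb2
    have exp1 : ((t • B - A) g : H) = t • (B g) - A g := by
      simp [ContinuousLinearMap.sub_apply, ContinuousLinearMap.smul_apply]
    have exp2 : ((t • B + A) g : H) = t • (B g) + A g := by
      simp [ContinuousLinearMap.add_apply, ContinuousLinearMap.smul_apply]
    have hsm : (inner ℂ ((t : ℝ) • B g) g : ℂ).re = t * (inner ℂ (B g) g : ℂ).re := by
      have e : (t : ℝ) • B g = ((t : ℝ) : ℂ) • B g := (Complex.coe_smul t (B g)).symm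
      rw [e, inner_smul_left, Complex.conj_ofReal]
      simp [Complex.mul_re]
    have hBre : (inner ℂ (B g) g : ℂ).re = ‖x‖ ^ 2 := by
      rw [hB, ← Complex.ofReal_pow, Complex.ofReal_re]
    rw [exp1, inner_sub_left, Complex.sub_re, hsm, hBre] at hb1
    rw [exp2, inner_add_left, Complex.add_re, hsm, hBre] at hb2
    rw [hq]
    rw [abs_le]
    constructor <;> linarith
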